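/- arXiv:2403.16500 — 9 statements merged into one kernel-verified Lean document; each statement's English description precedes it below -/
import Mathlib

section
/- Let G be a locally compact group and θ : G × G → ℂ a normalized positive definite kernel such that sup_{g ∈ G} ‖g·θ − θ‖_cb < ε. If x, y ∈ G are such that |θ(y⁻¹xy, 1) − 1| < ε and |θ(y, 1) − 1| < ε, then |θ(x, 1) − 1| < 2ε + 4ε^{1/2}. -/
noncomputable section

/-- A normalized positive definite kernel on a topological group: `θ (x, y) = ⟪F x, F y⟫`
for some continuous map `F` into a complex Hilbert space with `‖F x‖ = 1` everywhere. -/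
def IsNormalizedPDKernel {G : Type*} [TopologicalSpace G] (θ : G × G → ℂ) : Prop :=
  ∃ (H : Type) (_ : NormedAddCommGroup H) (_ : InnerProductSpace ℂ H) (_ : CompleteSpace H) (F : G → H),
    Continuous F ∧ (∀ x, ‖F x‖ = 1) ∧ ∀ x y : G, θ (x, y) = inner ℂ (F x) (F y)

/-- `sup_{g ∈ G} ‖g·θ − θ‖_cb < ε`, where `‖·‖_cb` is the infimum of
`(sup ‖P‖)·(sup ‖Q‖)` over factorizations through a complex Hilbert space. -/
def SupCbLT {G : Type*} [Group G] (θ : G × G → ℂ) (ε : ℝ) : Prop :=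
  ∃ c : ℝ, c < ε ∧ ∀ g : G,
    ∃ (H : Type) (_ : NormedAddCommGroup H) (_ : InnerProductSpace ℂ H) (_ : CompleteSpace H)
      (P Q : G → H) (CP CQ : ℝ),
      (∀ x, ‖P x‖ ≤ CP) ∧ (∀ y, ‖Q y‖ ≤ CQ) ∧
      (∀ x y : G, θ (g * x, g * y) - θ (x, y) = inner ℂ (P x) (Q y)) ∧ CP * CQ ≤ c


lemma unit_diff_le {H : Type} [NormedAddCommGroup H] [InnerProductSpace ℂ H]
    (u v : H) (hu : ‖u‖ = 1) (hv : ‖v‖ = 1) :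
    ‖u - v‖ ≤ Real.sqrt (2 * ‖(inner ℂ u v : ℂ) - 1‖) := by
  rw [show (2 : ℝ) * ‖(inner ℂ u v : ℂ) - 1‖
        = 2 * ‖1 - (inner ℂ u v : ℂ)‖ by rw [← norm_neg]; ring_nf]
  rw [Real.le_sqrt (norm_nonneg _)]
  have h := norm_sub_sq (𝕜 := ℂ) u v
  have hre : Complex.re (1 - (inner ℂ u v : ℂ)) ≤ ‖1 - (inner ℂ u v : ℂ)‖ :=
    Complex.re_le_norm _
  have : ‖u - v‖ ^ 2 = 2 * Complex.re (1 - (inner ℂ u v : ℂ)) := by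
    rw [h, hu, hv]
    simp [Complex.sub_re]
    ring
  rw [this]
  linarith
  positivity

lemma sqrt_four_mul (ε : ℝ) (hε : 0 ≤ ε) : Real.sqrt (4 * ε) = 2 * Real.sqrt ε := by
  rw [show (4 : ℝ) = 2 ^ 2 by norm_num, Real.sqrt_mul (by positivity), Real.sqrt_sq (by norm_num)]

/-- Mautner-type lemma: let `G` be a locally compact group and `θ` a normalized positive
definite kernel with `sup_g ‖g·θ − θ‖_cb < ε`. If `|θ(y⁻¹xy, 1) − 1| < ε` and
`|θ(y, 1) − 1| < ε`, then `|θ(x, 1) − 1| < 2ε + 4√ε`. -/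
theorem mautner_almost_invariance
    (G : Type) [Group G] [TopologicalSpace G] [IsTopologicalGroup G] [T2Space G]
    [LocallyCompactSpace G]
    (θ : G × G → ℂ) (ε : ℝ)
    (hθ : IsNormalizedPDKernel θ)
    (hcb : SupCbLT θ ε)
    (x y : G)
    (hx : ‖θ (y⁻¹ * x * y, 1) - 1‖ < ε)
    (hy : ‖θ (y, 1) - 1‖ < ε) :
    ‖θ (x, 1) - 1‖ < 2 * ε + 4 * Real.sqrt ε := by
  obtain ⟨H, _, _, _, F, hFc, hF1, hFθ⟩ := hθ
  obtain ⟨c, hcε, hg⟩ := hcb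
  have hε : 0 < ε := lt_of_le_of_lt (norm_nonneg _) hx
  -- translation bound
  have key : ∀ g a b : G, ‖θ (g * a, g * b) - θ (a, b)‖ ≤ c := by
    intro g a b
    obtain ⟨H', _, _, _, P, Q, CP, CQ, hP, hQ, hPQ, hCc⟩ := hg g
    rw [hPQ a b]
    calc ‖(inner ℂ (P a) (Q b) : ℂ)‖ ≤ ‖P a‖ * ‖Q b‖ := norm_inner_le_norm _ _
      _ ≤ CP * CQ :=
        mul_le_mul (hP a) (hQ b) (norm_nonneg _) (le_trans (norm_nonneg _) (hP a))
      _ ≤ c := hCc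
  have hc0 : 0 ≤ c := le_trans (norm_nonneg _) (key 1 1 1)
  -- |θ(1,y) - 1| = |θ(y,1) - 1|
  have h1y : ‖θ (1, y) - 1‖ < ε := by
    have : θ (1, y) = (starRingEnd ℂ) (θ (y, 1)) := by
      rw [hFθ, hFθ, inner_conj_symm]
    rw [this, show (starRingEnd ℂ) (θ (y, 1)) - 1 = (starRingEnd ℂ) (θ (y, 1) - 1) by
      rw [map_sub]; norm_num, Complex.norm_conj]
    exact hy
  -- distance bounds
  have d1 : ‖F 1 - F y‖ ≤ 2 * Real.sqrt ε := by
    rw [norm_sub_rev]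
    calc ‖F y - F 1‖ ≤ Real.sqrt (2 * ‖(inner ℂ (F y) (F 1) : ℂ) - 1‖) :=
          unit_diff_le _ _ (hF1 y) (hF1 1)
      _ ≤ Real.sqrt (4 * ε) := by
          apply Real.sqrt_le_sqrt
          rw [← hFθ]
          nlinarith [norm_nonneg (θ (y, 1) - 1)]
      _ = 2 * Real.sqrt ε := sqrt_four_mul ε hε.le
  have d2 : ‖F x - F (x * y)‖ ≤ 2 * Real.sqrt ε := by
    have hxy : ‖θ (x, x * y) - 1‖ ≤ c + ε := by
      have h1 : ‖θ (x * 1, x * y) - θ (1, y)‖ ≤ c := key x 1 y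
      rw [mul_one] at h1
      calc ‖θ (x, x * y) - 1‖
          ≤ ‖θ (x, x * y) - θ (1, y)‖ + ‖θ (1, y) - 1‖ := by
            have := norm_sub_le_norm_sub_add_norm_sub (θ (x, x * y)) (θ (1, y)) 1
            linarith
        _ ≤ c + ε := by linarith [h1y.le]
    calc ‖F x - F (x * y)‖ ≤ Real.sqrt (2 * ‖(inner ℂ (F x) (F (x * y)) : ℂ) - 1‖) :=
          unit_diff_le _ _ (hF1 x) (hF1 (x * y))
      _ ≤ Real.sqrt (4 * ε) := by
          apply Real.sqrt_le_sqrt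
          rw [← hFθ]
          nlinarith
      _ = 2 * Real.sqrt ε := sqrt_four_mul ε hε.le
  -- |θ(x,1) - θ(xy,y)| ≤ d1 + d2
  have step1 : ‖θ (x, 1) - θ (x * y, y)‖ ≤ 4 * Real.sqrt ε := by
    rw [hFθ, hFθ]
    have hsplit : (inner ℂ (F x) (F 1) : ℂ) - inner ℂ (F (x * y)) (F y)
        = (inner ℂ (F x) (F 1 - F y) : ℂ) + inner ℂ (F x - F (x * y)) (F y) := by
      rw [inner_sub_right, inner_sub_left]; ring
    rw [hsplit]
    calc ‖(inner ℂ (F x) (F 1 - F y) : ℂ) + inner ℂ (F x - F (x * y)) (F y)‖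
        ≤ ‖(inner ℂ (F x) (F 1 - F y) : ℂ)‖ + ‖(inner ℂ (F x - F (x * y)) (F y) : ℂ)‖ :=
          norm_add_le _ _
      _ ≤ ‖F x‖ * ‖F 1 - F y‖ + ‖F x - F (x * y)‖ * ‖F y‖ := by
          gcongr <;> exact norm_inner_le_norm _ _
      _ = ‖F 1 - F y‖ + ‖F x - F (x * y)‖ := by rw [hF1, hF1]; ring
      _ ≤ 4 * Real.sqrt ε := by linarith
  -- |θ(xy,y) - θ(y⁻¹xy,1)| ≤ c
  have step2 : ‖θ (x * y, y) - θ (y⁻¹ * x * y, 1)‖ ≤ c := by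
    have := key y (y⁻¹ * x * y) 1
    rw [show y * (y⁻¹ * x * y) = x * y by group, mul_one] at this
    exact this
  -- combine
  calc ‖θ (x, 1) - 1‖
      ≤ ‖θ (x, 1) - θ (x * y, y)‖ + ‖θ (x * y, y) - θ (y⁻¹ * x * y, 1)‖
        + ‖θ (y⁻¹ * x * y, 1) - 1‖ := by
        have h1 := norm_sub_le_norm_sub_add_norm_sub (θ (x, 1)) (θ (x * y, y)) 1
        have h2 := norm_sub_le_norm_sub_add_norm_sub (θ (x * y, y)) (θ (y⁻¹ * x * y, 1)) 1
        linarith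
    _ < 2 * ε + 4 * Real.sqrt ε := by linarith
end
end

section
/- Let G₁ and G₂ be locally compact groups and φ : G₁ → G₂ a surjective quasi-homomorphism. If G₁ has property (TTT), then G₂ has property (TTT). -/
noncomputable section

/-- A map is Borel measurable with respect to the Borel σ-algebras of the topologies. -/
def BorelMeasurableMap {X Y : Type*} [TopologicalSpace X] [TopologicalSpace Y] (f : X → Y) : Prop :=
  @Measurable X Y (borel X) (borel Y) f

/-- `(b, π)` is a wq-cocycle on `G`: `π` is a Borel map into the unitary group of the
complex Hilbert space `H`, `b` is Borel, locally bounded, and has finite defect. -/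
structure IsWqCocycle {G : Type*} [Group G] [TopologicalSpace G]
    {H : Type*} [NormedAddCommGroup H] [InnerProductSpace ℂ H] [CompleteSpace H]
    (b : G → H) (π : G → H ≃ₗᵢ[ℂ] H) : Prop where
  borel_b : BorelMeasurableMap b
  borel_pi : ∀ ξ : H, BorelMeasurableMap fun g => π g ξ
  loc_bdd : ∀ K : Set G, IsCompact K → ∃ C : ℝ, ∀ g ∈ K, ‖b g‖ ≤ C
  defect : ∃ D : ℝ, ∀ g h : G, ‖b (g * h) - b g - π g (b h)‖ ≤ D

/-- Property (TTT): every wq-cocycle is bounded. -/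
def HasTTT (G : Type*) [Group G] [TopologicalSpace G] : Prop :=
  ∀ (H : Type) [NormedAddCommGroup H] [InnerProductSpace ℂ H] [CompleteSpace H]
    (b : G → H) (π : G → H ≃ₗᵢ[ℂ] H),
    IsWqCocycle b π → ∃ C : ℝ, ∀ g : G, ‖b g‖ ≤ C

/-- A quasi-homomorphism between topological groups: a Borel map which is regular
(images of compact sets are relatively compact) and whose defect set
`{φ(gh)⁻¹ φ(g) φ(h)}` is relatively compact. -/
structure IsQuasiHom {G₁ G₂ : Type*} [Group G₁] [TopologicalSpace G₁]
    [Group G₂] [TopologicalSpace G₂] (φ : G₁ → G₂) : Prop where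
  borel : BorelMeasurableMap φ
  regular : ∀ K : Set G₁, IsCompact K → IsCompact (closure (φ '' K))
  defect : IsCompact (closure {x : G₂ | ∃ g h : G₁, x = (φ (g * h))⁻¹ * (φ g * φ h)})

/-- Let `G₁`, `G₂` be locally compact groups and `φ : G₁ → G₂` a surjective
quasi-homomorphism. If `G₁` has property (TTT), then `G₂` has property (TTT). -/
theorem hasTTT_of_surjective_quasiHom
    (G₁ : Type) [Group G₁] [TopologicalSpace G₁] [IsTopologicalGroup G₁] [LocallyCompactSpace G₁]
    (G₂ : Type) [Group G₂] [TopologicalSpace G₂] [IsTopologicalGroup G₂] [LocallyCompactSpace G₂]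
    (φ : G₁ → G₂) (hφ : IsQuasiHom φ) (hsurj : Function.Surjective φ)
    (hG₁ : HasTTT G₁) : HasTTT G₂ := by
  intro H _ _ _ b π hcoc
  -- The defect set of φ
  set S : Set G₂ := {x : G₂ | ∃ g h : G₁, x = (φ (g * h))⁻¹ * (φ g * φ h)} with hS
  -- b is bounded on (closure S)⁻¹
  obtain ⟨M, hM⟩ := hcoc.loc_bdd (closure S)⁻¹ hφ.defect.inv
  obtain ⟨D, hD⟩ := hcoc.defect
  -- pull back the cocycle along φ
  have hpull : IsWqCocycle (b ∘ φ) (π ∘ φ) := by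
    refine ⟨hcoc.borel_b.comp hφ.borel, fun ξ => (hcoc.borel_pi ξ).comp hφ.borel, ?_, ?_⟩
    · intro K hK
      obtain ⟨C, hC⟩ := hcoc.loc_bdd (closure (φ '' K)) (hφ.regular K hK)
      exact ⟨C, fun g hg => hC _ (subset_closure ⟨g, hg, rfl⟩)⟩
    · refine ⟨D + M + D, fun g h => ?_⟩
      set x := φ g
      set y := φ h
      have hd : (φ (g * h))⁻¹ * (x * y) ∈ S := ⟨g, h, rfl⟩
      set d := (φ (g * h))⁻¹ * (x * y) with hdd
      have hz : φ (g * h) = (x * y) * d⁻¹ := by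
        rw [hdd]; group
      have hdinv : ‖b d⁻¹‖ ≤ M := hM _ (Set.inv_mem_inv.mpr (subset_closure hd))
      have h1 : ‖b (φ (g * h)) - b (x * y) - π (x * y) (b d⁻¹)‖ ≤ D := by
        rw [hz]; exact hD (x * y) d⁻¹
      have h2 : ‖b (x * y) - b x - π x (b y)‖ ≤ D := hD x y
      have key : b (φ (g * h)) - b x - π x (b y)
          = (b (φ (g * h)) - b (x * y) - π (x * y) (b d⁻¹))
            + π (x * y) (b d⁻¹) + (b (x * y) - b x - π x (b y)) := by abel
      calc ‖(b ∘ φ) (g * h) - (b ∘ φ) g - (π ∘ φ) g ((b ∘ φ) h)‖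
          = ‖(b (φ (g * h)) - b (x * y) - π (x * y) (b d⁻¹))
            + π (x * y) (b d⁻¹) + (b (x * y) - b x - π x (b y))‖ := by
            simp only [Function.comp_apply]; rw [key]
        _ ≤ ‖(b (φ (g * h)) - b (x * y) - π (x * y) (b d⁻¹))
            + π (x * y) (b d⁻¹)‖ + ‖b (x * y) - b x - π x (b y)‖ := norm_add_le _ _
        _ ≤ ‖b (φ (g * h)) - b (x * y) - π (x * y) (b d⁻¹)‖
            + ‖π (x * y) (b d⁻¹)‖ + ‖b (x * y) - b x - π x (b y)‖ := by
            gcongr; exact norm_add_le _ _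
        _ ≤ D + M + D := by
            rw [(π (x * y)).norm_map]
            gcongr
  obtain ⟨C, hC⟩ := hG₁ H (b ∘ φ) (π ∘ φ) hpull
  refine ⟨C, fun y => ?_⟩
  obtain ⟨g, rfl⟩ := hsurj y
  exact hC g
end
end

section
/- Let G be a second countable locally compact group and N a closed normal subgroup of G. If N and the quotient group G/N both have property (TTT), then G has property (TTT). -/
noncomputable section

/- ### Auxiliary material: a Borel, locally bounded section of `G → G ⧸ N`. -/

namespace TTTAux

open Set TopologicalSpace MeasureTheory

variable {G : Type*} [Group G] [TopologicalSpace G]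

/-- The fiber of the quotient map over `x`. -/
def fibQ (N : Subgroup G) (x : G ⧸ N) : Set G := QuotientGroup.mk ⁻¹' {x}

/-- The least index `n` such that the fiber over `x` meets `g n • V`. -/
noncomputable def idxQ (N : Subgroup G) (V : Set G) (g : ℕ → G) (x : G ⧸ N) : ℕ :=
  sInf {n | (fibQ N x ∩ (fun z => g n * z) '' V).Nonempty}

open Classical in
/-- A decreasing sequence of compact pieces of the fiber over `x`, obtained by a
lexicographic selection scheme along the countable family of open sets `W`. -/
noncomputable def FQ (N : Subgroup G) (V : Set G) (g : ℕ → G) (W : ℕ → Set G)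
    (x : G ⧸ N) : ℕ → Set G
  | 0 => fibQ N x ∩ (fun z => g (idxQ N V g x) * z) '' V
  | k + 1 =>
      if (FQ N V g W x k ∩ W k).Nonempty then FQ N V g W x k ∩ closure (W k)
      else FQ N V g W x k

open Classical in
/-- The section: a point in the intersection of all the `FQ` pieces. -/
noncomputable def secQ [One G] (N : Subgroup G) (V : Set G) (g : ℕ → G) (W : ℕ → Set G)
    (x : G ⧸ N) : G :=
  if h : (⋂ k, FQ N V g W x k).Nonempty then h.some else 1

/-- In a locally compact second countable space, every open set is a countable union of
compact sets. -/
lemma open_iUnion_compact [LocallyCompactSpace G] [SecondCountableTopology G]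
    {U : Set G} (hU : IsOpen U) :
    ∃ L : ℕ → Set G, (∀ n, IsCompact (L n)) ∧ ⋃ n, L n = U := by
  classical
  rcases U.eq_empty_or_nonempty with rfl | hUne
  · exact ⟨fun _ => ∅, fun _ => isCompact_empty, by simp⟩
  choose K hKc hKm hKU using fun y : U => exists_compact_subset hU y.2
  obtain ⟨T, hTc, hTU⟩ :=
    TopologicalSpace.isOpen_iUnion_countable (fun y : U => interior (K y))
      fun _ => isOpen_interior
  have hTne : T.Nonempty := by
    obtain ⟨y, hy⟩ := hUne
    have h1 : y ∈ ⋃ i : U, interior (K i) := mem_iUnion.mpr ⟨⟨y, hy⟩, hKm _⟩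
    rw [← hTU] at h1
    obtain ⟨i, hiT, -⟩ := mem_iUnion₂.mp h1
    exact ⟨i, hiT⟩
  obtain ⟨f, hf⟩ := hTc.exists_eq_range hTne
  refine ⟨fun n => K (f n), fun n => hKc _, subset_antisymm ?_ ?_⟩
  · intro z hz
    obtain ⟨n, hn⟩ := mem_iUnion.mp hz
    exact hKU _ hn
  · intro z hz
    have h1 : z ∈ ⋃ i : U, interior (K i) := mem_iUnion.mpr ⟨⟨z, hz⟩, hKm _⟩
    rw [← hTU] at h1
    obtain ⟨i, hiT, hzi⟩ := mem_iUnion₂.mp h1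
    rw [hf] at hiT
    obtain ⟨n, rfl⟩ := hiT
    exact mem_iUnion.mpr ⟨n, interior_subset hzi⟩

/-- If `N` is closed, the image in `G ⧸ N` of a compact set is closed. -/
lemma isClosed_image_mk [IsTopologicalGroup G] {N : Subgroup G} (hclosed : IsClosed (N : Set G))
    {C : Set G} (hC : IsCompact C) :
    IsClosed ((QuotientGroup.mk '' C : Set (G ⧸ N))) := by
  rw [← (QuotientGroup.isQuotientMap_mk N).isClosed_preimage,
    QuotientGroup.preimage_image_mk_eq_mul]
  exact hclosed.mul_left_of_isCompact hC

/-- Measurability of the set of `x` whose fiber meets `C ∩ U`, `C` compact, `U` open. -/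
lemma meas_trace [IsTopologicalGroup G] [T2Space G] [LocallyCompactSpace G]
    [SecondCountableTopology G] {N : Subgroup G} (hclosed : IsClosed (N : Set G))
    {C U : Set G} (hC : IsCompact C) (hU : IsOpen U) :
    MeasurableSet[borel (G ⧸ N)] {x | (fibQ N x ∩ (C ∩ U)).Nonempty} := by
  letI : MeasurableSpace (G ⧸ N) := borel _
  haveI : BorelSpace (G ⧸ N) := ⟨rfl⟩
  obtain ⟨L, hLc, hLU⟩ := open_iUnion_compact hU
  have hset : {x | (fibQ N x ∩ (C ∩ U)).Nonempty}
      = ⋃ n, (QuotientGroup.mk '' (C ∩ L n) : Set (G ⧸ N)) := by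
    ext x
    simp only [mem_setOf_eq, mem_iUnion]
    constructor
    · rintro ⟨y, hyf, hyC, hyU⟩
      rw [← hLU] at hyU
      obtain ⟨n, hn⟩ := mem_iUnion.mp hyU
      exact ⟨n, y, ⟨hyC, hn⟩, hyf⟩
    · rintro ⟨n, y, ⟨hyC, hyn⟩, rfl⟩
      exact ⟨y, rfl, hyC, hLU ▸ mem_iUnion.mpr ⟨n, hyn⟩⟩
  rw [hset]
  exact MeasurableSet.iUnion fun n =>
    (isClosed_image_mk hclosed (hC.inter (hLc n))).measurableSet

/-- Structure and measurability of the compact pieces `FQ`. -/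
lemma meas_FQ [IsTopologicalGroup G] [T2Space G] [LocallyCompactSpace G]
    [SecondCountableTopology G] {N : Subgroup G} (hclosed : IsClosed (N : Set G))
    {V : Set G} (hV : IsCompact V) (g : ℕ → G) {W : ℕ → Set G} (hW : ∀ k, IsOpen (W k))
    (hne : ∀ x : G ⧸ N, {n | (fibQ N x ∩ (fun z => g n * z) '' V).Nonempty}.Nonempty)
    (k : ℕ) :
    ∃ c : G ⧸ N → Set G,
      (∀ x, FQ N V g W x k = fibQ N x ∩ c x) ∧ (∀ x, IsCompact (c x)) ∧
      (Set.range c).Countable ∧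
      ∀ C : Set G, MeasurableSet[borel (G ⧸ N)] {x | c x = C} := by
  classical
  letI : MeasurableSpace (G ⧸ N) := borel _
  haveI : BorelSpace (G ⧸ N) := ⟨rfl⟩
  induction k with
  | zero =>
    refine ⟨fun x => (fun z => g (idxQ N V g x) * z) '' V, fun x => rfl,
      fun x => hV.image (continuous_mul_left _), ?_, ?_⟩
    · refine Set.Countable.mono ?_ (Set.countable_range fun n : ℕ => (fun z => g n * z) '' V)
      rintro _ ⟨x, rfl⟩
      exact ⟨idxQ N V g x, rfl⟩
    · intro C
      have hidxm : ∀ n : ℕ, MeasurableSet {x : G ⧸ N | idxQ N V g x = n} := by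
        intro n
        have heq : {x : G ⧸ N | idxQ N V g x = n} =
            {x | (fibQ N x ∩ ((fun z => g n * z) '' V ∩ univ)).Nonempty} ∩
              ⋂ m ∈ Finset.range n,
                {x | (fibQ N x ∩ ((fun z => g m * z) '' V ∩ univ)).Nonempty}ᶜ := by
          ext x
          simp only [mem_setOf_eq, mem_inter_iff, mem_iInter, mem_compl_iff,
            Finset.mem_range, inter_univ]
          constructor
          · rintro rfl
            exact ⟨Nat.sInf_mem (hne x), fun m hm => Nat.notMem_of_lt_sInf hm⟩
          · rintro ⟨h1, h2⟩
            refine le_antisymm (Nat.sInf_le h1) ?_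
            by_contra hlt
            push_neg at hlt
            exact h2 _ hlt (Nat.sInf_mem (hne x))
        rw [heq]
        exact (meas_trace hclosed (hV.image (continuous_mul_left _)) isOpen_univ).inter
          (MeasurableSet.biInter (Finset.range n).countable_toSet fun m _ =>
            (meas_trace hclosed (hV.image (continuous_mul_left _)) isOpen_univ).compl)
      have hset : {x : G ⧸ N | (fun z => g (idxQ N V g x) * z) '' V = C} =
          ⋃ n : ℕ, ⋃ _ : (fun z => g n * z) '' V = C, {x : G ⧸ N | idxQ N V g x = n} := by
        ext x
        simp only [mem_setOf_eq, mem_iUnion]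
        constructor
        · intro h
          exact ⟨_, h, rfl⟩
        · rintro ⟨n, hn, h⟩
          rw [h]
          exact hn
      rw [hset]
      exact MeasurableSet.iUnion fun n => MeasurableSet.iUnion fun _ => hidxm n
  | succ k ih =>
    obtain ⟨c, hc_eq, hc_cpt, hc_cnt, hc_meas⟩ := ih
    set A : Set (G ⧸ N) := {x | (FQ N V g W x k ∩ W k).Nonempty} with hA
    have hA_meas : MeasurableSet A := by
      have hset : A = ⋃ C ∈ Set.range c,
          ({x | c x = C} ∩ {x | (fibQ N x ∩ (C ∩ W k)).Nonempty}) := by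
        ext x
        simp only [hA, mem_setOf_eq, mem_iUnion, exists_prop, mem_inter_iff]
        constructor
        · intro h
          refine ⟨c x, mem_range_self x, rfl, ?_⟩
          rwa [hc_eq x, inter_assoc] at h
        · rintro ⟨C, -, hCx, h⟩
          rw [hc_eq x, inter_assoc, hCx]
          exact h
      rw [hset]
      refine MeasurableSet.biUnion hc_cnt fun C hC => ?_
      obtain ⟨x₀, rfl⟩ := hC
      exact (hc_meas _).inter (meas_trace hclosed (hc_cpt x₀) (hW k))
    refine ⟨fun x => if x ∈ A then c x ∩ closure (W k) else c x, ?_, ?_, ?_, ?_⟩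
    · intro x
      by_cases hx : x ∈ A
      · have hx' : (FQ N V g W x k ∩ W k).Nonempty := hx
        simp only [FQ]
        rw [if_pos hx, if_pos hx', hc_eq x, inter_assoc]
      · have hx' : ¬(FQ N V g W x k ∩ W k).Nonempty := hx
        simp only [FQ]
        rw [if_neg hx, if_neg hx']
        exact hc_eq x
    · intro x
      dsimp only
      by_cases hx : x ∈ A
      · rw [if_pos hx]
        exact (hc_cpt x).inter_right isClosed_closure
      · rw [if_neg hx]
        exact hc_cpt x
    · refine Set.Countable.mono ?_
        ((hc_cnt.image (fun C => C ∩ closure (W k))).union hc_cnt)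
      rintro _ ⟨x, rfl⟩
      dsimp only
      by_cases hx : x ∈ A
      · rw [if_pos hx]
        exact Or.inl (mem_image_of_mem _ (mem_range_self x))
      · rw [if_neg hx]
        exact Or.inr (mem_range_self x)
    · intro C
      dsimp only
      have hset : {x | (if x ∈ A then c x ∩ closure (W k) else c x) = C} =
          (A ∩ ⋃ C' ∈ Set.range c, ⋃ _ : C' ∩ closure (W k) = C, {x | c x = C'}) ∪
            (Aᶜ ∩ {x | c x = C}) := by
        ext x
        simp only [mem_setOf_eq, mem_union, mem_inter_iff, mem_iUnion, mem_compl_iff,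
          exists_prop]
        by_cases hx : x ∈ A
        · rw [if_pos hx]
          constructor
          · intro h
            exact Or.inl ⟨hx, c x, mem_range_self x, h, rfl⟩
          · rintro (⟨-, C', -, hCC', hcx⟩ | ⟨hx', -⟩)
            · rw [hcx]
              exact hCC'
            · exact absurd hx hx'
        · rw [if_neg hx]
          constructor
          · intro h
            exact Or.inr ⟨hx, h⟩
          · rintro (⟨hx', -⟩ | ⟨-, h⟩)
            · exact absurd hx' hx
            · exact h
      rw [hset]
      refine (hA_meas.inter ?_).union (hA_meas.compl.inter (hc_meas C))
      exact MeasurableSet.biUnion hc_cnt fun C' _ =>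
        MeasurableSet.iUnion fun _ => hc_meas C'

/-- Existence of a Borel, locally bounded section of the quotient map `G → G ⧸ N`. -/
theorem exists_borel_section [IsTopologicalGroup G] [T2Space G] [LocallyCompactSpace G]
    [SecondCountableTopology G] (N : Subgroup G) (hclosed : IsClosed (N : Set G)) :
    ∃ s : G ⧸ N → G, (@Measurable _ _ (borel (G ⧸ N)) (borel G) s) ∧
      (∀ x, QuotientGroup.mk (s x) = x) ∧
      ∀ K : Set (G ⧸ N), IsCompact K → ∃ L : Set G, IsCompact L ∧ ∀ x ∈ K, s x ∈ L := by
  classical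
  -- a compact neighborhood of 1 and a countable cover of G by its translates
  obtain ⟨V, hVc, hV1⟩ := exists_compact_mem_nhds (1 : G)
  have hU1 : (1 : G) ∈ interior V := mem_interior_iff_mem_nhds.2 hV1
  have hnhds : ∀ y : G, (fun z => y * z) '' interior V ∈ nhds y := by
    intro y
    have hopen : IsOpen ((fun z => y * z) '' interior V) :=
      (Homeomorph.mulLeft y).isOpenMap _ isOpen_interior
    exact hopen.mem_nhds ⟨1, hU1, mul_one y⟩
  obtain ⟨T, hTc, hTcov⟩ := TopologicalSpace.countable_cover_nhds hnhds
  have hTne : T.Nonempty := by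
    rcases T.eq_empty_or_nonempty with h | h
    · exfalso
      have h1 : (1 : G) ∈ ⋃ y ∈ T, (fun z => y * z) '' interior V :=
        hTcov.symm ▸ Set.mem_univ _
      simp [h] at h1
    · exact h
  obtain ⟨g, hgT⟩ := hTc.exists_eq_range hTne
  have hcov : ∀ y : G, ∃ n, y ∈ (fun z => g n * z) '' interior V := by
    intro y
    have h1 : y ∈ ⋃ z ∈ T, (fun w => z * w) '' interior V := hTcov.symm ▸ Set.mem_univ y
    rcases mem_iUnion₂.mp h1 with ⟨z, hzT, hy⟩
    rw [hgT] at hzT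
    rcases hzT with ⟨n, rfl⟩
    exact ⟨n, hy⟩
  -- a countable basis with the regularity property
  obtain ⟨B, hBc, -, hBbasis⟩ := TopologicalSpace.exists_countable_basis G
  have hBne : B.Nonempty := by
    obtain ⟨b, hbB, h1b, -⟩ :=
      hBbasis.exists_subset_of_mem_open (Set.mem_univ (1 : G)) isOpen_univ
    exact ⟨b, hbB⟩
  obtain ⟨W, hWB⟩ := hBc.exists_eq_range hBne
  have hWo : ∀ k, IsOpen (W k) := fun k => hBbasis.isOpen (hWB ▸ mem_range_self k)
  have hbasis : ∀ (y : G) (O : Set G), IsOpen O → y ∈ O →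
      ∃ k, y ∈ W k ∧ closure (W k) ⊆ O := by
    intro y O hO hyO
    obtain ⟨t, htn, htc, hts⟩ := exists_mem_nhds_isClosed_subset (hO.mem_nhds hyO)
    obtain ⟨b, hbB, hyb, hbt⟩ :=
      hBbasis.exists_subset_of_mem_open (mem_interior_iff_mem_nhds.2 htn) isOpen_interior
    rw [hWB] at hbB
    obtain ⟨k, rfl⟩ := hbB
    refine ⟨k, hyb, ?_⟩
    have hcl : closure (W k) ⊆ closure t := closure_mono (hbt.trans interior_subset)
    rw [htc.closure_eq] at hcl
    exact hcl.trans hts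
  -- fibers are closed and meet the translates
  have hfib_closed : ∀ x : G ⧸ N, IsClosed (fibQ N x) := by
    intro x
    obtain ⟨y, rfl⟩ := QuotientGroup.mk_surjective x
    have heq : fibQ N (QuotientGroup.mk y) = (fun z => z⁻¹ * y) ⁻¹' (N : Set G) := by
      ext z
      simp only [fibQ, Set.mem_preimage, Set.mem_singleton_iff, QuotientGroup.eq,
        SetLike.mem_coe]
    rw [heq]
    exact hclosed.preimage (continuous_inv.mul continuous_const)
  have hfibne : ∀ x : G ⧸ N,
      {n | (fibQ N x ∩ (fun z => g n * z) '' V).Nonempty}.Nonempty := by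
    intro x
    obtain ⟨y, rfl⟩ := QuotientGroup.mk_surjective x
    obtain ⟨n, hn⟩ := hcov y
    exact ⟨n, y, rfl, (Set.image_mono interior_subset) hn⟩
  have hidx : ∀ x : G ⧸ N,
      (fibQ N x ∩ (fun z => g (idxQ N V g x) * z) '' V).Nonempty :=
    fun x => Nat.sInf_mem (hfibne x)
  -- basic properties of FQ
  have hFQ_ne : ∀ (x : G ⧸ N) (k : ℕ), (FQ N V g W x k).Nonempty := by
    intro x k
    induction k with
    | zero => exact hidx x
    | succ k ih =>
      by_cases h : (FQ N V g W x k ∩ W k).Nonempty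
      · simp only [FQ]
        rw [if_pos h]
        obtain ⟨y, hy⟩ := h
        exact ⟨y, hy.1, subset_closure hy.2⟩
      · simp only [FQ]
        rw [if_neg h]
        exact ih
  have hFQ_anti : ∀ (x : G ⧸ N) (k : ℕ), FQ N V g W x (k + 1) ⊆ FQ N V g W x k := by
    intro x k
    by_cases h : (FQ N V g W x k ∩ W k).Nonempty
    · simp only [FQ]
      rw [if_pos h]
      exact Set.inter_subset_left
    · simp only [FQ]
      rw [if_neg h]
  have hFQ_le0 : ∀ (x : G ⧸ N) (k : ℕ), FQ N V g W x k ⊆ FQ N V g W x 0 := by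
    intro x k
    induction k with
    | zero => exact subset_rfl
    | succ k ih => exact (hFQ_anti x k).trans ih
  have hFQ_fib : ∀ (x : G ⧸ N) (k : ℕ), FQ N V g W x k ⊆ fibQ N x := by
    intro x k
    exact (hFQ_le0 x k).trans Set.inter_subset_left
  have hFQ_closed : ∀ (x : G ⧸ N) (k : ℕ), IsClosed (FQ N V g W x k) := by
    intro x k
    induction k with
    | zero =>
      exact (hfib_closed x).inter (hVc.image (continuous_mul_left _)).isClosed
    | succ k ih =>
      by_cases h : (FQ N V g W x k ∩ W k).Nonempty
      · simp only [FQ]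
        rw [if_pos h]
        exact ih.inter isClosed_closure
      · simp only [FQ]
        rw [if_neg h]
        exact ih
  have hFQ_cpt : ∀ (x : G ⧸ N) (k : ℕ), IsCompact (FQ N V g W x k) := by
    intro x k
    have h0 : IsCompact (FQ N V g W x 0) :=
      (hVc.image (continuous_mul_left _)).inter_left (hfib_closed x)
    exact h0.of_isClosed_subset (hFQ_closed x k) (hFQ_le0 x k)
  have hIcap_ne : ∀ x : G ⧸ N, (⋂ k, FQ N V g W x k).Nonempty := fun x =>
    IsCompact.nonempty_iInter_of_sequence_nonempty_isCompact_isClosed _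
      (hFQ_anti x) (hFQ_ne x) (hFQ_cpt x 0) (hFQ_closed x)
  -- the section
  set s : G ⧸ N → G := secQ N V g W with hs
  have hsmem : ∀ (x : G ⧸ N) (k : ℕ), s x ∈ FQ N V g W x k := by
    intro x k
    have h := hIcap_ne x
    have hmem : s x ∈ ⋂ k, FQ N V g W x k := by
      rw [hs]
      simp only [secQ]
      rw [dif_pos h]
      exact h.some_mem
    exact mem_iInter.mp hmem k
  have hsec : ∀ x : G ⧸ N, QuotientGroup.mk (s x) = x := fun x => hFQ_fib x 0 (hsmem x 0)
  -- measurability of the selection events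
  have hA_meas : ∀ k : ℕ,
      MeasurableSet[borel (G ⧸ N)] {x | (FQ N V g W x k ∩ W k).Nonempty} := by
    intro k
    obtain ⟨c, hc_eq, hc_cpt, hc_cnt, hc_meas⟩ := meas_FQ hclosed hVc g hWo hfibne k
    letI : MeasurableSpace (G ⧸ N) := borel _
    haveI : BorelSpace (G ⧸ N) := ⟨rfl⟩
    have hset : {x | (FQ N V g W x k ∩ W k).Nonempty} = ⋃ C ∈ Set.range c,
        ({x | c x = C} ∩ {x | (fibQ N x ∩ (C ∩ W k)).Nonempty}) := by
      ext x
      simp only [mem_setOf_eq, Set.mem_iUnion, exists_prop, Set.mem_inter_iff]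
      constructor
      · intro h
        refine ⟨c x, mem_range_self x, rfl, ?_⟩
        rwa [hc_eq x, inter_assoc] at h
      · rintro ⟨C, -, hCx, h⟩
        rw [hc_eq x, inter_assoc, hCx]
        exact h
    rw [hset]
    refine MeasurableSet.biUnion hc_cnt fun C hC => ?_
    obtain ⟨x₀, rfl⟩ := hC
    exact (hc_meas _).inter (meas_trace hclosed (hc_cpt x₀) (hWo k))
  -- measurability of the section
  have hs_meas : @Measurable _ _ (borel (G ⧸ N)) (borel G) s := by
    letI : MeasurableSpace (G ⧸ N) := borel _
    refine measurable_generateFrom ?_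
    intro O hO
    have hO' : IsOpen O := hO
    have hset : s ⁻¹' O = ⋃ k : {k : ℕ // closure (W k) ⊆ O},
        {x | (FQ N V g W x (k : ℕ) ∩ W (k : ℕ)).Nonempty} := by
      ext x
      simp only [Set.mem_preimage, Set.mem_iUnion, mem_setOf_eq]
      constructor
      · intro hx
        obtain ⟨k, hk1, hk2⟩ := hbasis (s x) O hO' hx
        exact ⟨⟨k, hk2⟩, ⟨s x, hsmem x k, hk1⟩⟩
      · rintro ⟨⟨k, hk⟩, hne2⟩
        have h1 : FQ N V g W x (k + 1) = FQ N V g W x k ∩ closure (W k) := by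
          simp only [FQ]
          rw [if_pos hne2]
        have h2 := hsmem x (k + 1)
        rw [h1] at h2
        exact hk h2.2
    rw [hset]
    exact MeasurableSet.iUnion fun k => hA_meas (k : ℕ)
  refine ⟨s, hs_meas, hsec, ?_⟩
  -- local boundedness
  intro K hK
  have hcov2 : K ⊆ ⋃ n : ℕ, QuotientGroup.mk '' ((fun z => g n * z) '' interior V) := by
    intro x hx
    obtain ⟨y, rfl⟩ := QuotientGroup.mk_surjective x
    obtain ⟨n, hn⟩ := hcov y
    exact Set.mem_iUnion.2 ⟨n, ⟨y, hn, rfl⟩⟩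
  obtain ⟨t, ht⟩ := hK.elim_finite_subcover
    (fun n => QuotientGroup.mk '' ((fun z => g n * z) '' interior V))
    (fun n => QuotientGroup.isOpenMap_coe _
      ((Homeomorph.mulLeft _).isOpenMap _ isOpen_interior)) hcov2
  refine ⟨⋃ m ∈ Finset.range (t.sup id + 1), (fun z => g m * z) '' V,
    (Finset.range (t.sup id + 1)).isCompact_biUnion
      (fun m _ => hVc.image (continuous_mul_left _)), ?_⟩
  intro x hx
  have hxm : idxQ N V g x ≤ t.sup id := by
    obtain ⟨n, hnt, hxn⟩ := Set.mem_iUnion₂.mp (ht hx)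
    obtain ⟨y, hy, rfl⟩ := hxn
    have hmemS : n ∈ {n | (fibQ N (QuotientGroup.mk y) ∩ (fun z => g n * z) '' V).Nonempty} :=
      ⟨y, rfl, (Set.image_mono interior_subset) hy⟩
    exact le_trans (Nat.sInf_le hmemS) (Finset.le_sup (f := id) hnt)
  have hmem0 := hsmem x 0
  exact Set.mem_biUnion (Finset.mem_range.2 (Nat.lt_succ_of_le hxm)) hmem0.2

end TTTAux

/-- Let `G` be a second countable locally compact group and `N` a closed normal subgroup.
If `N` and `G/N` have property (TTT), then so does `G`. -/
theorem hasTTT_of_extension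
    (G : Type) [Group G] [TopologicalSpace G] [IsTopologicalGroup G] [T2Space G]
    [LocallyCompactSpace G] [SecondCountableTopology G]
    (N : Subgroup G) [N.Normal] (hclosed : IsClosed (N : Set G))
    (hN : HasTTT N) (hQ : HasTTT (G ⧸ N)) : HasTTT G := by
  intro H _ _ _ b π hcoc
  obtain ⟨sB, hs_meas, hs_sec, hs_loc⟩ := TTTAux.exists_borel_section N hclosed
  obtain ⟨D, hD⟩ := hcoc.defect
  -- the restricted cocycle on N
  have hNcoc : IsWqCocycle (fun n : N => b ↑n) (fun n : N => π ↑n) := by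
    refine ⟨?_, ?_, ?_, ?_⟩
    · exact Measurable.comp hcoc.borel_b continuous_subtype_val.borel_measurable
    · intro ξ
      exact Measurable.comp (hcoc.borel_pi ξ) continuous_subtype_val.borel_measurable
    · intro K hK
      obtain ⟨C, hC⟩ := hcoc.loc_bdd (Subtype.val '' K) (hK.image continuous_subtype_val)
      exact ⟨C, fun n hn => hC _ ⟨n, hn, rfl⟩⟩
    · refine ⟨D, fun m₁ m₂ => ?_⟩
      have : ((m₁ * m₂ : N) : G) = (m₁ : G) * (m₂ : G) := rfl
      rw [this]
      exact hD _ _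
  obtain ⟨CN, hCN⟩ := hN H (fun n : N => b ↑n) (fun n : N => π ↑n) hNcoc
  -- the induced cocycle on G ⧸ N
  have hQcoc : IsWqCocycle (fun x => b (sB x)) (fun x => π (sB x)) := by
    refine ⟨?_, ?_, ?_, ?_⟩
    · exact Measurable.comp hcoc.borel_b hs_meas
    · intro ξ
      exact Measurable.comp (hcoc.borel_pi ξ) hs_meas
    · intro K hK
      obtain ⟨L, hL, hKL⟩ := hs_loc K hK
      obtain ⟨C, hC⟩ := hcoc.loc_bdd L hL
      exact ⟨C, fun x hx => hC _ (hKL x hx)⟩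
    · refine ⟨D + D + CN, fun x y => ?_⟩
      have h1 : (QuotientGroup.mk (sB x * sB y) : G ⧸ N) = x * y := by
        rw [QuotientGroup.mk_mul, hs_sec, hs_sec]
      have hmem : (sB (x * y))⁻¹ * (sB x * sB y) ∈ N :=
        QuotientGroup.eq.mp ((hs_sec (x * y)).trans h1.symm)
      set m : N := ⟨(sB (x * y))⁻¹ * (sB x * sB y), hmem⟩ with hm
      have hprod : sB (x * y) * (m : G) = sB x * sB y := by
        rw [hm]
        exact mul_inv_cancel_left _ _
      have e1 : ‖b (sB x * sB y) - b (sB x) - π (sB x) (b (sB y))‖ ≤ D := hD _ _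
      have e2 : ‖b (sB x * sB y) - b (sB (x * y)) - π (sB (x * y)) (b (m : G))‖ ≤ D := by
        have := hD (sB (x * y)) (m : G)
        rwa [hprod] at this
      have e3 : ‖π (sB (x * y)) (b (m : G))‖ ≤ CN := by
        rw [LinearIsometryEquiv.norm_map]
        exact hCN m
      calc ‖b (sB (x * y)) - b (sB x) - π (sB x) (b (sB y))‖
          = ‖(b (sB x * sB y) - b (sB x) - π (sB x) (b (sB y)))
              - (b (sB x * sB y) - b (sB (x * y)) - π (sB (x * y)) (b (m : G)))
              - π (sB (x * y)) (b (m : G))‖ := by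
            congr 1
            abel
        _ ≤ ‖(b (sB x * sB y) - b (sB x) - π (sB x) (b (sB y)))
              - (b (sB x * sB y) - b (sB (x * y)) - π (sB (x * y)) (b (m : G)))‖
            + ‖π (sB (x * y)) (b (m : G))‖ := norm_sub_le _ _
        _ ≤ ‖b (sB x * sB y) - b (sB x) - π (sB x) (b (sB y))‖
            + ‖b (sB x * sB y) - b (sB (x * y)) - π (sB (x * y)) (b (m : G))‖
            + ‖π (sB (x * y)) (b (m : G))‖ := by
            exact add_le_add (norm_sub_le _ _) le_rfl
        _ ≤ D + D + CN := add_le_add (add_le_add e1 e2) e3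
  obtain ⟨CQ, hCQ⟩ := hQ H (fun x => b (sB x)) (fun x => π (sB x)) hQcoc
  -- conclude
  refine ⟨D + CQ + CN, fun g0 => ?_⟩
  have hmem : (sB (QuotientGroup.mk g0))⁻¹ * g0 ∈ N := QuotientGroup.eq.mp (hs_sec _)
  set m : N := ⟨(sB (QuotientGroup.mk g0))⁻¹ * g0, hmem⟩ with hm
  have hprod : sB (QuotientGroup.mk g0) * (m : G) = g0 := by
    rw [hm]
    exact mul_inv_cancel_left _ _
  have e2 : ‖b g0 - b (sB (QuotientGroup.mk g0))
      - π (sB (QuotientGroup.mk g0)) (b (m : G))‖ ≤ D := by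
    have := hD (sB (QuotientGroup.mk g0)) (m : G)
    rwa [hprod] at this
  have e3 : ‖π (sB (QuotientGroup.mk g0)) (b (m : G))‖ ≤ CN := by
    rw [LinearIsometryEquiv.norm_map]
    exact hCN m
  calc ‖b g0‖
      = ‖(b g0 - b (sB (QuotientGroup.mk g0)) - π (sB (QuotientGroup.mk g0)) (b (m : G)))
          + b (sB (QuotientGroup.mk g0)) + π (sB (QuotientGroup.mk g0)) (b (m : G))‖ := by
        congr 1
        abel
    _ ≤ ‖b g0 - b (sB (QuotientGroup.mk g0)) - π (sB (QuotientGroup.mk g0)) (b (m : G))‖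
        + ‖b (sB (QuotientGroup.mk g0))‖
        + ‖π (sB (QuotientGroup.mk g0)) (b (m : G))‖ := norm_add₃_le
    _ ≤ D + CQ + CN := add_le_add (add_le_add e2 (hCQ _)) e3
end
end

section
/- Let G and G' be locally compact groups. Suppose G has property (TTT) and there exists a proper wq-cocycle (b', π') on G', i.e., a wq-cocycle such that for every n ∈ ℕ the set {g ∈ G' : ‖b'(g)‖ ≤ n} is relatively compact in G'. Then every quasi-homomorphism φ : G → G' has relatively compact image. -/
noncomputable section

/-- Suppose `G` has property (TTT) and `G'` admits a proper wq-cocycle (one whose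
sublevel sets `{g : ‖b' g‖ ≤ n}` are relatively compact). Then every quasi-homomorphism
`φ : G → G'` has relatively compact image. -/
theorem quasiHom_image_relCompact_of_TTT_of_proper
    (G : Type) [Group G] [TopologicalSpace G] [IsTopologicalGroup G] [LocallyCompactSpace G]
    (G' : Type) [Group G'] [TopologicalSpace G'] [IsTopologicalGroup G'] [LocallyCompactSpace G']
    (hG : HasTTT G)
    (hproper : ∃ (H : Type) (_ : NormedAddCommGroup H) (_ : InnerProductSpace ℂ H)
      (_ : CompleteSpace H) (b' : G' → H) (π' : G' → H ≃ₗᵢ[ℂ] H),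
      IsWqCocycle b' π' ∧ ∀ n : ℕ, IsCompact (closure {g : G' | ‖b' g‖ ≤ (n : ℝ)}))
    (φ : G → G') (hφ : IsQuasiHom φ) :
    IsCompact (closure (Set.range φ)) := by
  obtain ⟨H, _, _, _, b', π', hbc, hp⟩ := hproper
  -- pull back the cocycle along φ
  set b : G → H := fun g => b' (φ g) with hb
  set π : G → H ≃ₗᵢ[ℂ] H := fun g => π' (φ g) with hπ
  -- defect set of φ
  set S : Set G' := {x : G' | ∃ g h : G, x = (φ (g * h))⁻¹ * (φ g * φ h)} with hSdef
  have hS : IsCompact (closure S) := hφ.defect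
  have hSinv : IsCompact ((closure S)⁻¹) := hS.inv
  obtain ⟨C₀, hC₀⟩ := hbc.loc_bdd ((closure S)⁻¹) hSinv
  obtain ⟨D, hD⟩ := hbc.defect
  have hwq : IsWqCocycle b π := by
    constructor
    · exact Measurable.comp (hbc.borel_b) (hφ.borel)
    · intro ξ
      exact Measurable.comp (hbc.borel_pi ξ) (hφ.borel)
    · intro K hK
      obtain ⟨C, hC⟩ := hbc.loc_bdd (closure (φ '' K)) (hφ.regular K hK)
      exact ⟨C, fun g hg => hC _ (subset_closure ⟨g, hg, rfl⟩)⟩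
    · refine ⟨D + C₀ + D, fun g h => ?_⟩
      set d : G' := (φ (g * h))⁻¹ * (φ g * φ h) with hd
      have hdS : d ∈ S := ⟨g, h, rfl⟩
      have hdinv : d⁻¹ ∈ (closure S)⁻¹ := by
        simpa using Set.inv_mem_inv.mpr (subset_closure hdS)
      have hφgh : φ (g * h) = (φ g * φ h) * d⁻¹ := by
        rw [hd]; group
      have key : b (g * h) - b g - π g (b h) =
          (b' ((φ g * φ h) * d⁻¹) - b' (φ g * φ h) - π' (φ g * φ h) (b' d⁻¹))
          + π' (φ g * φ h) (b' d⁻¹)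
          + (b' (φ g * φ h) - b' (φ g) - π' (φ g) (b' (φ h))) := by
        simp only [hb, hπ, hφgh]; abel
      rw [key]
      calc ‖_ + _ + _‖ ≤ ‖(b' ((φ g * φ h) * d⁻¹) - b' (φ g * φ h) - π' (φ g * φ h) (b' d⁻¹))
              + π' (φ g * φ h) (b' d⁻¹)‖
            + ‖b' (φ g * φ h) - b' (φ g) - π' (φ g) (b' (φ h))‖ := norm_add_le _ _
        _ ≤ (‖b' ((φ g * φ h) * d⁻¹) - b' (φ g * φ h) - π' (φ g * φ h) (b' d⁻¹)‖
              + ‖π' (φ g * φ h) (b' d⁻¹)‖)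
            + ‖b' (φ g * φ h) - b' (φ g) - π' (φ g) (b' (φ h))‖ := by
              gcongr; exact norm_add_le _ _
        _ ≤ (D + C₀) + D := by
              gcongr
              · exact hD _ _
              · rw [LinearIsometryEquiv.norm_map]; exact hC₀ _ hdinv
              · exact hD _ _
  obtain ⟨C, hC⟩ := hG H b π hwq
  set n : ℕ := ⌈max C 0⌉₊ with hn
  have hsub : Set.range φ ⊆ {g : G' | ‖b' g‖ ≤ (n : ℝ)} := by
    rintro _ ⟨g, rfl⟩
    exact le_trans (hC g) (le_trans (le_max_left _ _) (Nat.le_ceil _))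
  exact (hp n).of_isClosed_subset isClosed_closure (closure_mono hsub)
end
end

section
/- Let φ : G → G' be a quasi-homomorphism between locally compact groups and let (b, π) be a wq-cocycle on G'. Then (b∘φ, π∘φ) is a wq-cocycle on G; that is, b∘φ is Borel and locally bounded and sup_{g,h ∈ G} ‖b(φ(gh)) − b(φ(g)) − π(φ(g))b(φ(h))‖ < ∞. -/
noncomputable section

/-- If `φ : G → G'` is a quasi-homomorphism between locally compact groups and `(b, π)`
is a wq-cocycle on `G'`, then `(b ∘ φ, π ∘ φ)` is a wq-cocycle on `G`. -/
theorem isWqCocycle_comp_quasiHom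
    (G : Type) [Group G] [TopologicalSpace G] [IsTopologicalGroup G] [LocallyCompactSpace G]
    (G' : Type) [Group G'] [TopologicalSpace G'] [IsTopologicalGroup G'] [LocallyCompactSpace G']
    (φ : G → G') (hφ : IsQuasiHom φ)
    (H : Type) [NormedAddCommGroup H] [InnerProductSpace ℂ H] [CompleteSpace H]
    (b : G' → H) (π : G' → H ≃ₗᵢ[ℂ] H) (hb : IsWqCocycle b π) :
    IsWqCocycle (b ∘ φ) (fun g => π (φ g)) := by
  obtain ⟨D, hD⟩ := hb.defect
  obtain ⟨C, hC⟩ := hb.loc_bdd _ hφ.defect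
  refine ⟨hb.borel_b.comp hφ.borel, fun ξ => (hb.borel_pi ξ).comp hφ.borel,
    fun K hK => ?_, ⟨D + D + C, fun g h => ?_⟩⟩
  · obtain ⟨C', hC'⟩ := hb.loc_bdd _ (hφ.regular K hK)
    exact ⟨C', fun g hg => hC' _ (subset_closure (Set.mem_image_of_mem φ hg))⟩
  · set x := φ (g * h) with hx
    set d := x⁻¹ * (φ g * φ h) with hd
    have hxd : x * d = φ g * φ h := by rw [hd]; group
    have hdQ : ‖b d‖ ≤ C := hC d (subset_closure ⟨g, h, rfl⟩)
    have h1 : ‖b (x * d) - b x - π x (b d)‖ ≤ D := hD x d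
    have h2 : ‖b (x * d) - b (φ g) - π (φ g) (b (φ h))‖ ≤ D := by
      rw [hxd]; exact hD (φ g) (φ h)
    have key : (b ∘ φ) (g * h) - (b ∘ φ) g - π (φ g) ((b ∘ φ) h)
        = (b (x * d) - b (φ g) - π (φ g) (b (φ h)))
          - (b (x * d) - b x - π x (b d)) - π x (b d) := by
      simp only [Function.comp_apply, ← hx]; abel
    calc ‖(b ∘ φ) (g * h) - (b ∘ φ) g - π (φ g) ((b ∘ φ) h)‖
        = ‖(b (x * d) - b (φ g) - π (φ g) (b (φ h)))
            - (b (x * d) - b x - π x (b d)) - π x (b d)‖ := by rw [key]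
      _ ≤ ‖(b (x * d) - b (φ g) - π (φ g) (b (φ h)))
            - (b (x * d) - b x - π x (b d))‖ + ‖π x (b d)‖ := norm_sub_le _ _
      _ ≤ ‖b (x * d) - b (φ g) - π (φ g) (b (φ h))‖
            + ‖b (x * d) - b x - π x (b d)‖ + ‖π x (b d)‖ := by
          gcongr; exact norm_sub_le _ _
      _ ≤ D + D + C := by rw [(π x).norm_map]; gcongr
end
end

section
/- Let G be a locally compact second countable group, Z a closed central subgroup, p : G → G/Z the quotient map, and s : G/Z → G a Borel section of p which is regular (the image of every compact set is relatively compact) and whose defect set S = {s(xy)(s(x)s(y))⁻¹ : x, y ∈ G/Z} is finite. Assume the quotient group G/Z has property (TTT). If (b, π) is a wq-cocycle on G such that b is bounded on Z, then b is bounded on all of G. -/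
noncomputable section

/-- Let `G` be a locally compact second countable group, `Z` a closed central subgroup,
and `s : G/Z → G` a regular Borel section of the quotient map with finite defect set
`S = {s(xy)(s(x)s(y))⁻¹}`. If `G/Z` has property (TTT) and `(b, π)` is a wq-cocycle on
`G` with `b` bounded on `Z`, then `b` is bounded on all of `G`. -/
theorem bounded_of_bounded_on_center
    (G : Type) [Group G] [TopologicalSpace G] [IsTopologicalGroup G] [T2Space G]
    [LocallyCompactSpace G] [SecondCountableTopology G]
    (Z : Subgroup G) [Z.Normal] (hcentral : Z ≤ Subgroup.center G)
    (hclosed : IsClosed (Z : Set G))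
    (s : G ⧸ Z → G)
    (hs_borel : BorelMeasurableMap s)
    (hs_sect : ∀ x : G ⧸ Z, (QuotientGroup.mk (s x) : G ⧸ Z) = x)
    (hs_reg : ∀ K : Set (G ⧸ Z), IsCompact K → IsCompact (closure (s '' K)))
    (hS : Set.Finite {w : G | ∃ x y : G ⧸ Z, w = s (x * y) * (s x * s y)⁻¹})
    (hTTT : HasTTT (G ⧸ Z))
    (H : Type) [NormedAddCommGroup H] [InnerProductSpace ℂ H] [CompleteSpace H]
    (b : G → H) (π : G → H ≃ₗᵢ[ℂ] H) (hb : IsWqCocycle b π)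
    (hbZ : ∃ C : ℝ, ∀ z ∈ Z, ‖b z‖ ≤ C) :
    ∃ C : ℝ, ∀ g : G, ‖b g‖ ≤ C := by
  classical
  obtain ⟨D, hD⟩ := hb.defect
  obtain ⟨CZ, hCZ⟩ := hbZ
  obtain ⟨M, hM⟩ := (hS.image fun w => ‖b w‖).bddAbove
  have hMb : ∀ x y : G ⧸ Z, ‖b (s (x * y) * (s x * s y)⁻¹)‖ ≤ M := fun x y =>
    hM (Set.mem_image_of_mem _ ⟨x, y, rfl⟩)
  have hwZ : ∀ x y : G ⧸ Z, s (x * y) * (s x * s y)⁻¹ ∈ Z := by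
    intro x y
    have h1 : (QuotientGroup.mk (s (x * y) * (s x * s y)⁻¹) : G ⧸ Z) = 1 := by
      have := hs_sect (x * y)
      have h2 := hs_sect x
      have h3 := hs_sect y
      simp only [QuotientGroup.mk_mul, QuotientGroup.mk_inv]
      rw [this, h2, h3, mul_inv_cancel]
    exact (QuotientGroup.eq_one_iff _).mp h1
  -- the induced wq-cocycle on the quotient
  set b' : G ⧸ Z → H := fun x => b (s x) with hb'def
  set π' : G ⧸ Z → H ≃ₗᵢ[ℂ] H := fun x => π (s x) with hπ'def
  have hcoc : IsWqCocycle b' π' := by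
    refine ⟨?_, ?_, ?_, ?_⟩
    · exact hb.borel_b.comp hs_borel
    · intro ξ
      exact (hb.borel_pi ξ).comp hs_borel
    · intro K hK
      obtain ⟨C, hC⟩ := hb.loc_bdd _ (hs_reg K hK)
      exact ⟨C, fun x hx => hC _ (subset_closure (Set.mem_image_of_mem s hx))⟩
    · refine ⟨D + M + D, ?_⟩
      intro x y
      set w := s (x * y) * (s x * s y)⁻¹ with hwdef
      have hwc : ∀ g : G, g * w = w * g :=
        Subgroup.mem_center_iff.mp (hcentral (hwZ x y))
      have hsxy : s (x * y) = (s x * s y) * w := by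
        rw [hwc, hwdef]; group
      have key : b' (x * y) - b' x - π' x (b' y) =
          (b ((s x * s y) * w) - b (s x * s y) - π (s x * s y) (b w))
          + π (s x * s y) (b w)
          + (b (s x * s y) - b (s x) - π (s x) (b (s y))) := by
        simp only [hb'def, hπ'def, hsxy]
        abel
      rw [key]
      calc ‖_ + _ + _‖ ≤ ‖(b ((s x * s y) * w) - b (s x * s y) - π (s x * s y) (b w))‖
            + ‖π (s x * s y) (b w)‖
            + ‖(b (s x * s y) - b (s x) - π (s x) (b (s y)))‖ := norm_add₃_le
        _ ≤ D + M + D := by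
            refine add_le_add (add_le_add (hD _ _) ?_) (hD _ _)
            rw [LinearIsometryEquiv.norm_map]
            exact hMb x y
  obtain ⟨C, hC⟩ := hTTT H b' π' hcoc
  refine ⟨D + C + CZ, ?_⟩
  intro g
  set x : G ⧸ Z := QuotientGroup.mk g with hxdef
  set z : G := (s x)⁻¹ * g with hzdef
  have hzZ : z ∈ Z := by
    have h1 : (QuotientGroup.mk z : G ⧸ Z) = 1 := by
      simp only [hzdef, QuotientGroup.mk_mul, QuotientGroup.mk_inv]
      rw [hs_sect, ← hxdef, inv_mul_cancel]
    exact (QuotientGroup.eq_one_iff _).mp h1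
  have hg : g = s x * z := by rw [hzdef]; group
  have key : b g = (b (s x * z) - b (s x) - π (s x) (b z)) + π (s x) (b z) + b (s x) := by
    rw [hg]; abel
  rw [key]
  calc ‖_ + _ + _‖ ≤ ‖b (s x * z) - b (s x) - π (s x) (b z)‖
        + ‖π (s x) (b z)‖ + ‖b (s x)‖ := norm_add₃_le
    _ ≤ D + CZ + C := by
        refine add_le_add (add_le_add (hD _ _) ?_) (hC x)
        rw [LinearIsometryEquiv.norm_map]
        exact hCZ z hzZ
    _ = D + C + CZ := by ring
end
end

section
/- Let G be a locally compact second countable group, Z a closed central subgroup, p : G → G/Z the quotient map, and s : G/Z → G a Borel section of p which is regular (the image of every compact set is relatively compact) and whose defect set S = {s(xy)(s(x)s(y))⁻¹ : x, y ∈ G/Z} is finite. Assume the quotient group G/Z has property (TTT). For g ∈ G set z_g = g·s(p(g))⁻¹ ∈ Z. If (b, π) is a wq-cocycle on G, then sup_{g ∈ G, z ∈ Z} ‖π(g)b(z) − π(z_g)b(z)‖ < ∞. -/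
noncomputable section

/-- Let `G` be a locally compact second countable group, `Z` a closed central subgroup,
and `s : G/Z → G` a regular Borel section of the quotient map `p` with finite defect set.
Set `z_g = g·s(p(g))⁻¹ ∈ Z`. If `G/Z` has property (TTT) and `(b, π)` is a wq-cocycle on
`G`, then `sup_{g ∈ G, z ∈ Z} ‖π(g) b(z) − π(z_g) b(z)‖ < ∞`. -/
theorem almost_central_action_on_cocycle
    (G : Type) [Group G] [TopologicalSpace G] [IsTopologicalGroup G] [T2Space G]
    [LocallyCompactSpace G] [SecondCountableTopology G]
    (Z : Subgroup G) [Z.Normal] (hcentral : Z ≤ Subgroup.center G)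
    (hclosed : IsClosed (Z : Set G))
    (s : G ⧸ Z → G)
    (hs_borel : BorelMeasurableMap s)
    (hs_sect : ∀ x : G ⧸ Z, (QuotientGroup.mk (s x) : G ⧸ Z) = x)
    (hs_reg : ∀ K : Set (G ⧸ Z), IsCompact K → IsCompact (closure (s '' K)))
    (hS : Set.Finite {w : G | ∃ x y : G ⧸ Z, w = s (x * y) * (s x * s y)⁻¹})
    (hTTT : HasTTT (G ⧸ Z))
    (H : Type) [NormedAddCommGroup H] [InnerProductSpace ℂ H] [CompleteSpace H]
    (b : G → H) (π : G → H ≃ₗᵢ[ℂ] H) (hb : IsWqCocycle b π) :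
    ∃ C : ℝ, ∀ g : G, ∀ z ∈ Z,
      ‖π g (b z) - π (g * (s (QuotientGroup.mk g))⁻¹) (b z)‖ ≤ C := by

  obtain ⟨D, hD⟩ := hb.defect
  -- bound on the (finite) defect set
  obtain ⟨M, hM⟩ := (hS.image fun w => ‖b w‖).bddAbove
  have hMw : ∀ x y : G ⧸ Z, ‖b (s (x * y) * (s x * s y)⁻¹)‖ ≤ M := fun x y =>
    hM (Set.mem_image_of_mem _ ⟨x, y, rfl⟩)
  -- elements of the defect set are central
  have hScentral : ∀ x y : G ⧸ Z, ∀ t : G,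
      t * (s (x * y) * (s x * s y)⁻¹) = (s (x * y) * (s x * s y)⁻¹) * t := by
    intro x y t
    have hmem : s (x * y) * (s x * s y)⁻¹ ∈ Z := by
      rw [← QuotientGroup.eq_one_iff]
      simp [QuotientGroup.mk_mul, QuotientGroup.mk_inv, hs_sect]
    exact Subgroup.mem_center_iff.mp (hcentral hmem) t
  -- the induced wq-cocycle on the quotient
  have hcoc : IsWqCocycle (fun x : G ⧸ Z => b (s x)) (fun x : G ⧸ Z => π (s x)) := by
    constructor
    · exact hb.borel_b.comp hs_borel
    · intro ξ; exact (hb.borel_pi ξ).comp hs_borel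
    · intro K hK
      obtain ⟨C, hC⟩ := hb.loc_bdd (closure (s '' K)) (hs_reg K hK)
      exact ⟨C, fun x hx => hC _ (subset_closure (Set.mem_image_of_mem s hx))⟩
    · refine ⟨D + M + D, fun x y => ?_⟩
      have huw : (s x * s y) * (s (x * y) * (s x * s y)⁻¹) = s (x * y) := by
        rw [hScentral x y (s x * s y)]; group
      have e1 := hD (s x * s y) (s (x * y) * (s x * s y)⁻¹)
      rw [huw] at e1
      have e2 := hD (s x) (s y)
      have key : b (s (x * y)) - b (s x) - π (s x) (b (s y))
          = (b (s (x * y)) - b (s x * s y)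
              - π (s x * s y) (b (s (x * y) * (s x * s y)⁻¹)))
            + π (s x * s y) (b (s (x * y) * (s x * s y)⁻¹))
            + (b (s x * s y) - b (s x) - π (s x) (b (s y))) := by abel
      show ‖b (s (x * y)) - b (s x) - π (s x) (b (s y))‖ ≤ D + M + D
      rw [key]
      refine le_trans (norm_add_le _ _) (add_le_add ?_ e2)
      refine le_trans (norm_add_le _ _) (add_le_add e1 ?_)
      rw [(π (s x * s y)).norm_map]
      exact hMw x y
  obtain ⟨C₀, hC₀⟩ := hTTT H _ _ hcoc
  -- key commutation estimate
  have key : ∀ g t : G, (∀ x : G, t * x = x * t) →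
      ‖π g (b t) - (b t + π t (b g) - b g)‖ ≤ D + D := by
    intro g t ht
    have e1 := hD g t
    have e2 := hD t g
    rw [ht g] at e2
    have heq : π g (b t) - (b t + π t (b g) - b g)
        = (b (g * t) - b t - π t (b g)) - (b (g * t) - b g - π g (b t)) := by abel
    rw [heq]
    exact le_trans (norm_sub_le _ _) (add_le_add e2 e1)
  refine ⟨(D + D) + (D + D) + (D + C₀) + (D + C₀), fun g z hz => ?_⟩
  have hzc : ∀ x : G, z * x = x * z := fun x =>
    (Subgroup.mem_center_iff.mp (hcentral hz) x).symm
  set zg := g * (s (QuotientGroup.mk g : G ⧸ Z))⁻¹ with hzg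
  have k1 := key g z hzc
  have k2 := key zg z hzc
  have hgz : zg * s (QuotientGroup.mk g : G ⧸ Z) = g := by rw [hzg]; group
  have e3 := hD zg (s (QuotientGroup.mk g : G ⧸ Z))
  rw [hgz] at e3
  have hbs : ‖b (s (QuotientGroup.mk g : G ⧸ Z))‖ ≤ C₀ := hC₀ _
  have hdiff : ‖b g - b zg‖ ≤ D + C₀ := by
    have heq : b g - b zg
        = (b g - b zg - π zg (b (s (QuotientGroup.mk g : G ⧸ Z))))
          + π zg (b (s (QuotientGroup.mk g : G ⧸ Z))) := by abel
    rw [heq]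
    refine le_trans (norm_add_le _ _) (add_le_add e3 ?_)
    rw [(π zg).norm_map]
    exact hbs
  have hπ : ‖π z (b g) - π z (b zg)‖ ≤ D + C₀ := by
    rw [← map_sub, (π z).norm_map]
    exact hdiff
  have main : π g (b z) - π zg (b z)
      = (π g (b z) - (b z + π z (b g) - b g))
        - (π zg (b z) - (b z + π z (b zg) - b zg))
        + (π z (b g) - π z (b zg)) - (b g - b zg) := by abel
  show ‖π g (b z) - π zg (b z)‖ ≤ (D + D) + (D + D) + (D + C₀) + (D + C₀)
  rw [main]
  refine le_trans (norm_sub_le _ _) (add_le_add ?_ hdiff)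
  refine le_trans (norm_add_le _ _) (add_le_add ?_ hπ)
  exact le_trans (norm_sub_le _ _) (add_le_add k1 k2)
end
end

section
/- Let G be a locally compact second countable group, N a closed normal subgroup, and σ : G/N → G a Borel section of the quotient map which is regular (the image of every compact subset of G/N is relatively compact in G). If (b, π) is a wq-cocycle on G such that b is bounded on N, then (b∘σ, π∘σ) is a wq-cocycle on G/N. -/
noncomputable section

/-- Let `G` be a locally compact second countable group, `N` a closed normal subgroup,
and `σ : G/N → G` a regular Borel section of the quotient map. If `(b, π)` is a
wq-cocycle on `G` with `b` bounded on `N`, then `(b ∘ σ, π ∘ σ)` is a wq-cocycle on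
`G/N`. -/
theorem wqCocycle_descends_along_section
    (G : Type) [Group G] [TopologicalSpace G] [IsTopologicalGroup G] [T2Space G]
    [LocallyCompactSpace G] [SecondCountableTopology G]
    (N : Subgroup G) [N.Normal] (hclosed : IsClosed (N : Set G))
    (σ : G ⧸ N → G)
    (hσ_borel : BorelMeasurableMap σ)
    (hσ_sect : ∀ x : G ⧸ N, (QuotientGroup.mk (σ x) : G ⧸ N) = x)
    (hσ_reg : ∀ K : Set (G ⧸ N), IsCompact K → IsCompact (closure (σ '' K)))
    (H : Type) [NormedAddCommGroup H] [InnerProductSpace ℂ H] [CompleteSpace H]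
    (b : G → H) (π : G → H ≃ₗᵢ[ℂ] H) (hb : IsWqCocycle b π)
    (hbN : ∃ C : ℝ, ∀ n ∈ N, ‖b n‖ ≤ C) :
    IsWqCocycle (b ∘ σ) (fun x => π (σ x)) := by
  obtain ⟨C, hC⟩ := hbN
  obtain ⟨D, hD⟩ := hb.defect
  constructor
  · exact hb.borel_b.comp hσ_borel
  · intro ξ
    exact (hb.borel_pi ξ).comp hσ_borel
  · intro K hK
    obtain ⟨C', hC'⟩ := hb.loc_bdd (closure (σ '' K)) (hσ_reg K hK)
    exact ⟨C', fun x hx => hC' (σ x) (subset_closure ⟨x, hx, rfl⟩)⟩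
  · refine ⟨C + 2 * D, fun x y => ?_⟩
    set n : G := (σ (x * y))⁻¹ * (σ x * σ y) with hn
    have hnN : n ∈ N := by
      rw [← QuotientGroup.eq]
      rw [hσ_sect, QuotientGroup.mk_mul, hσ_sect, hσ_sect]
    have key : σ x * σ y = σ (x * y) * n := by
      rw [hn]; group
    have h1 : ‖b (σ (x * y) * n) - b (σ (x * y)) - π (σ (x * y)) (b n)‖ ≤ D := hD _ _
    have h2 : ‖b (σ x * σ y) - b (σ x) - π (σ x) (b (σ y))‖ ≤ D := hD _ _
    have h3 : ‖π (σ (x * y)) (b n)‖ ≤ C := by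
      rw [(π (σ (x * y))).norm_map]
      exact hC n hnN
    calc ‖(b ∘ σ) (x * y) - (b ∘ σ) x - π (σ x) ((b ∘ σ) y)‖
        = ‖(b (σ (x * y)) - b (σ x * σ y))
            + (b (σ x * σ y) - b (σ x) - π (σ x) (b (σ y)))‖ := by
          simp only [Function.comp_apply]; congr 1; abel
      _ ≤ ‖b (σ (x * y)) - b (σ x * σ y)‖
            + ‖b (σ x * σ y) - b (σ x) - π (σ x) (b (σ y))‖ := norm_add_le _ _
      _ ≤ ‖b (σ (x * y)) - b (σ x * σ y)‖ + D := by linarith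
      _ ≤ C + 2 * D := by
          have : ‖b (σ (x * y)) - b (σ x * σ y)‖
              ≤ ‖π (σ (x * y)) (b n)‖ + ‖b (σ (x * y) * n) - b (σ (x * y)) - π (σ (x * y)) (b n)‖ := by
            rw [key]
            have : b (σ (x * y)) - b (σ (x * y) * n)
                = -(π (σ (x * y)) (b n)) - (b (σ (x * y) * n) - b (σ (x * y)) - π (σ (x * y)) (b n)) := by
              abel
            rw [this]
            exact (norm_sub_le _ _).trans (by rw [norm_neg])
          linarith
end
end

section
/- Let Y be a measurable space, H a separable complex Hilbert space, and (f_n)_{n∈ℕ} a sequence of measurable functions Y → H. Then there exists a sequence (a_n)_{n∈ℕ} of measurable functions Y → H such that for every y ∈ Y: each a_n(y) is either the zero vector or a unit vector, the nonzero vectors among (a_n(y))_{n∈ℕ} form an orthonormal family, and for every n ∈ ℕ the linear span of {a_0(y), …, a_n(y)} equals the linear span of {f_0(y), …, f_n(y)}. -/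
noncomputable section

/-- Measurable Gram–Schmidt: given a sequence of measurable functions `f n : Y → H` into
a separable complex Hilbert space, there is a sequence of measurable functions
`a n : Y → H` such that for every `y` each `a n y` is zero or a unit vector, the vectors
`a m y` and `a n y` for `m ≠ n` are orthogonal (so the nonzero ones form an orthonormal
family), and for each `n` the span of `a 0 y, …, a n y` equals the span of
`f 0 y, …, f n y`. -/
theorem measurable_gram_schmidt
    (Y : Type) [MeasurableSpace Y]
    (H : Type) [NormedAddCommGroup H] [InnerProductSpace ℂ H]
    [TopologicalSpace.SeparableSpace H] [MeasurableSpace H] [BorelSpace H]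
    (f : ℕ → Y → H) (hf : ∀ n, Measurable (f n)) :
    ∃ a : ℕ → Y → H,
      (∀ n, Measurable (a n)) ∧
      ∀ y : Y,
        (∀ n, a n y = 0 ∨ ‖a n y‖ = 1) ∧
        (∀ m n : ℕ, m ≠ n → (inner ℂ (a m y) (a n y) : ℂ) = 0) ∧
        ∀ n : ℕ, Submodule.span ℂ ((fun i => a i y) '' Set.Iic n) =
          Submodule.span ℂ ((fun i => f i y) '' Set.Iic n) := by
  haveI : SecondCountableTopology H := UniformSpace.secondCountable_of_separable H
  have hg : ∀ n, Measurable (fun y => InnerProductSpace.gramSchmidt ℂ (fun i => f i y) n) := by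
    intro n
    induction n using Nat.strong_induction_on with
    | _ n ih =>
      have heq : (fun y => InnerProductSpace.gramSchmidt ℂ (fun i => f i y) n) =
          fun y => f n y - ∑ i ∈ Finset.Iio n,
            ((inner ℂ (InnerProductSpace.gramSchmidt ℂ (fun j => f j y) i) (f n y) : ℂ) /
              ((‖InnerProductSpace.gramSchmidt ℂ (fun j => f j y) i‖ ^ 2 : ℝ) : ℂ)) •
              InnerProductSpace.gramSchmidt ℂ (fun j => f j y) i := by
        funext y
        rw [InnerProductSpace.gramSchmidt_def]
        congr 1
        exact Finset.sum_congr rfl fun i _ => Submodule.starProjection_singleton ℂ _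
      rw [heq]
      refine (hf n).sub (Finset.measurable_sum _ fun i hi => ?_)
      have hgi := ih i (Finset.mem_Iio.1 hi)
      exact (((Measurable.inner (𝕜 := ℂ) hgi (hf n)).div
        (Complex.measurable_ofReal.comp ((measurable_norm.comp hgi).pow_const 2))).smul hgi)
  refine ⟨fun n y => InnerProductSpace.gramSchmidtNormed ℂ (fun i => f i y) n, fun n => ?_, fun y => ⟨?_, ?_, ?_⟩⟩
  · exact ((Complex.measurable_ofReal.comp (measurable_norm.comp (hg n))).inv).smul (hg n)
  · intro n
    by_cases h : InnerProductSpace.gramSchmidtNormed ℂ (fun i => f i y) n = 0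
    · exact Or.inl h
    · exact Or.inr (InnerProductSpace.gramSchmidtNormed_unit_length' h)
  · intro m n hmn
    simp [InnerProductSpace.gramSchmidtNormed, inner_smul_left, inner_smul_right,
      InnerProductSpace.gramSchmidt_orthogonal ℂ _ hmn]
  · intro n
    rw [show ((fun i => InnerProductSpace.gramSchmidtNormed ℂ (fun j => f j y) i) '' Set.Iic n)
        = InnerProductSpace.gramSchmidtNormed ℂ (fun j => f j y) '' Set.Iic n from rfl,
      InnerProductSpace.span_gramSchmidtNormed, InnerProductSpace.span_gramSchmidt_Iic]
end
end
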